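/- Let k ≥ 2 be an integer and let π be the PageRank vector of Γ(k) for α = 1 − 1/k. Writing r = (1 − 1/k)/3, the squared Euclidean norm of π satisfies ‖π‖₂² > π_A² + π_{C1}² + π_{C2}²·(1 − r^{2k})/(1 − r²). -/
import Mathlib


/-- Arc relation of the graph `Γ(k)` on vertex indices `0, ..., k+2`, where
vertex `0` is `C1`, vertex `1` is `C2`, vertex `i+1` is `B_i` for `1 ≤ i ≤ k`,
and vertex `k+2` is `A`.  `PRadj k j i` holds iff there is an arc from `j` to `i`. -/
def PRadj (k j i : ℕ) : Prop :=
  (j = 0 ∧ (i = 0 ∨ i = 1)) ∨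
  (j = 1 ∧ (i = 0 ∨ i = 1 ∨ i = 2)) ∨
  (2 ≤ j ∧ j ≤ k + 1 ∧ (i = 0 ∨ i = 1 ∨ i = j + 1)) ∨
  (j = k + 2 ∧ i = k + 2)

instance (k j i : ℕ) : Decidable (PRadj k j i) := by unfold PRadj; infer_instance

/-- Out-degree of vertex `j` in `Γ(k)`:  `deg(C1) = 2`, `deg(A) = 1`, all others `3`. -/
def PRdeg (k j : ℕ) : ℕ := if j = 0 then 2 else if j = k + 2 then 1 else 3

/-- The PageRank matrix `R_α` of `Γ(k)`:  entry `(i, j)` is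
`α / deg(j) + (1 - α)/(k+3)` if there is an arc from `j` to `i`, and `(1 - α)/(k+3)`
otherwise. -/
noncomputable def PRmat (k : ℕ) (α : ℝ) : Matrix (Fin (k + 3)) (Fin (k + 3)) ℝ :=
  fun i j =>
    if PRadj k j.1 i.1 then α / (PRdeg k j.1 : ℝ) + (1 - α) / ((k : ℝ) + 3)
    else (1 - α) / ((k : ℝ) + 3)

/-- `π` is a PageRank vector of `Γ(k)` for jumping parameter `α`:  it has nonnegative
entries summing to `1` and satisfies `R_α π = π`. -/
def IsPageRank (k : ℕ) (α : ℝ) (π : Fin (k + 3) → ℝ) : Prop :=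
  (∀ v, 0 ≤ π v) ∧ (∑ v, π v = 1) ∧ (PRmat k α).mulVec π = π


/-- For `k ≥ 2` and `α = 1 - 1/k`, writing `r = (1 - 1/k)/3`, the PageRank vector
satisfies `‖π‖₂² > π_A² + π_{C1}² + π_{C2}²·(1 - r^(2k))/(1 - r²)`. -/
theorem pagerank_sq_norm_lower_bound (k : ℕ) (hk : 2 ≤ k) (π : Fin (k + 3) → ℝ)
    (hπ : IsPageRank k (1 - 1 / (k : ℝ)) π) (r : ℝ) (hr : r = (1 - 1 / (k : ℝ)) / 3) :
    (∑ v, π v ^ 2) >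
      π ⟨k + 2, by omega⟩ ^ 2 + π ⟨0, by omega⟩ ^ 2
        + π ⟨1, by omega⟩ ^ 2 * (1 - r ^ (2 * k)) / (1 - r ^ 2) := by
  obtain ⟨hpos, hsum, heq⟩ := hπ
  have hkR : (2:ℝ) ≤ (k:ℝ) := by exact_mod_cast hk
  set α : ℝ := 1 - 1 / (k:ℝ) with hα
  set ε : ℝ := (1 - α) / ((k:ℝ) + 3) with hε
  have hα0 : (0:ℝ) < α := by
    have : 1 / (k:ℝ) ≤ 1/2 := by
      rw [div_le_div_iff₀ (by linarith) (by norm_num)]; linarith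
    simp only [hα]; linarith
  have hα1 : α < 1 := by
    have : 0 < 1 / (k:ℝ) := by positivity
    simp only [hα]; linarith
  have hεpos : 0 < ε := by
    have h1 : 0 < 1 - α := by linarith
    rw [hε]; positivity
  have hrα : r = α / 3 := hr
  -- the entry-wise values of π as a function on ℕ
  set Q : ℕ → ℝ := fun m => if h : m < k + 3 then π ⟨m, h⟩ else 0 with hQ
  have hQeq : ∀ (m : ℕ) (h : m < k + 3), Q m = π ⟨m, h⟩ := fun m h => dif_pos h
  have hQpos : ∀ m, 0 ≤ Q m := by
    intro m
    by_cases h : m < k + 3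
    · rw [hQeq m h]; exact hpos _
    · simp [hQ, h]
  -- row equation for B-vertices
  have row : ∀ m : ℕ, 2 ≤ m → m ≤ k + 1 → Q m = α / 3 * Q (m - 1) + ε := by
    intro m hm2 hm
    have hmlt : m < k + 3 := by omega
    have hm1lt : m - 1 < k + 3 := by omega
    have h := congrFun heq ⟨m, hmlt⟩
    rw [Matrix.mulVec, dotProduct] at h
    have term : ∀ j : Fin (k+3),
        PRmat k α ⟨m, hmlt⟩ j * π j
          = ε * π j + (if j = (⟨m - 1, hm1lt⟩ : Fin (k+3)) then α / 3 * π j else 0) := by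
      intro j
      by_cases hj : j = (⟨m - 1, hm1lt⟩ : Fin (k+3))
      · have hj1 : j.1 = m - 1 := by rw [hj]
        have hadj : PRadj k j.1 m := by
          unfold PRadj; rw [hj1]
          rcases Nat.lt_or_ge m 3 with h3 | h3
          · right; left; omega
          · right; right; left; omega
        have hdeg : PRdeg k j.1 = 3 := by
          unfold PRdeg; rw [hj1, if_neg (by omega), if_neg (by omega)]
        simp only [PRmat]
        rw [if_pos hadj, hdeg, if_pos hj, hε]
        push_cast; ring
      · have hadj : ¬ PRadj k j.1 m := by
          unfold PRadj; intro hc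
          exact hj (Fin.ext (show j.1 = m - 1 by omega))
        simp only [PRmat]
        rw [if_neg hadj, if_neg hj, hε]
        ring
    rw [Finset.sum_congr rfl (fun j _ => term j), Finset.sum_add_distrib,
      ← Finset.mul_sum, hsum, Finset.sum_ite_eq' Finset.univ] at h
    simp only [Finset.mem_univ, if_pos, mul_one] at h
    rw [hQeq m hmlt, hQeq (m-1) hm1lt]
    linarith [h]
  clear_value Q
  clear_value α ε
  have hr0 : 0 < r := by rw [hrα]; linarith
  have hr1 : r < 1 := by rw [hrα]; linarith
  -- lower bound Q (i+1) ≥ r^i · Q 1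
  have lb : ∀ i, i ≤ k → r ^ i * Q 1 ≤ Q (i + 1) := by
    intro i
    induction i with
    | zero => intro _; simp
    | succ n ih =>
      intro hn
      have h1 : Q (n + 2) = α / 3 * Q (n + 1) + ε := row (n + 2) (by omega) (by omega)
      have h2 := ih (by omega)
      have h3 : r ^ (n + 1) * Q 1 = r * (r ^ n * Q 1) := by ring
      rw [h3]
      calc r * (r ^ n * Q 1) ≤ r * Q (n + 1) := mul_le_mul_of_nonneg_left h2 hr0.le
        _ ≤ Q (n + 2) := by rw [h1, hrα]; linarith
  have hBk : ε ≤ Q (k + 1) := by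
    have h1 : Q (k + 1) = α / 3 * Q k + ε := row (k + 1) (by omega) le_rfl
    have h2 := hQpos k
    nlinarith
  -- rewrite the sum over Fin (k+3)
  have hπQ : ∀ (m : ℕ) (h : m < k + 3), π ⟨m, h⟩ = Q m := fun m h => (hQeq m h).symm
  have hfs : (∑ v, π v ^ 2) = ∑ m ∈ Finset.range (k + 3), Q m ^ 2 := by
    rw [← Fin.sum_univ_eq_sum_range (fun m => Q m ^ 2) (k + 3)]
    exact Finset.sum_congr rfl fun v _ => by rw [hπQ v.1 v.2]
  have hsplit : ∑ m ∈ Finset.range (k + 3), Q m ^ 2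
      = (∑ i ∈ Finset.range k, Q (i + 1) ^ 2 + Q 0 ^ 2) + Q (k + 1) ^ 2 + Q (k + 2) ^ 2 := by
    rw [Finset.sum_range_succ, Finset.sum_range_succ, Finset.sum_range_succ']
  -- geometric bound
  have h1r2 : (0:ℝ) < 1 - r ^ 2 := by nlinarith
  have hgeom : Q 1 ^ 2 * (1 - r ^ (2 * k)) / (1 - r ^ 2)
      ≤ ∑ i ∈ Finset.range k, Q (i + 1) ^ 2 := by
    have hr2 : r ^ 2 ≠ 1 := by nlinarith
    have hne1 : (1:ℝ) - r ^ 2 ≠ 0 := ne_of_gt h1r2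
    have hne2 : r ^ 2 - 1 ≠ 0 := by intro h; apply hne1; linarith
    have step : ∀ i ∈ Finset.range k, Q 1 ^ 2 * (r ^ 2) ^ i ≤ Q (i + 1) ^ 2 := by
      intro i hi
      rw [Finset.mem_range] at hi
      have h1 := lb i (by omega)
      have h2 : 0 ≤ r ^ i * Q 1 := by
        have := hQpos 1; positivity
      have h4 : (r ^ i * Q 1) ^ 2 ≤ Q (i + 1) ^ 2 := pow_le_pow_left₀ h2 h1 2
      calc Q 1 ^ 2 * (r ^ 2) ^ i = (r ^ i * Q 1) ^ 2 := by ring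
        _ ≤ Q (i + 1) ^ 2 := h4
    calc Q 1 ^ 2 * (1 - r ^ (2 * k)) / (1 - r ^ 2)
        = ∑ i ∈ Finset.range k, Q 1 ^ 2 * (r ^ 2) ^ i := by
          rw [← Finset.mul_sum, geom_sum_eq hr2, pow_mul]
          field_simp
          ring
      _ ≤ ∑ i ∈ Finset.range k, Q (i + 1) ^ 2 := Finset.sum_le_sum step
  have hε2 : 0 < Q (k + 1) ^ 2 := by nlinarith
  rw [hfs, hsplit, hπQ (k+2) (by omega), hπQ 0 (by omega), hπQ 1 (by omega)]
  linarith
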